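/- Let 0 < b_c < a_c and let P = (x, y, z) have elliptic coordinates k₀, k₁, k₂ with −a_c² < k₂ < −b_c² < k₁ < 0 < k₀. With n₀, n₂ and the generator direction v := a_e b_e c_e · n₀ + a_{h2} b_{h2} c_{h2} · n₂ of the one-sheeted hyperboloid ℋ₁ through P, the angle θ/2 between the side direction v and the tangent plane of the ellipsoid ℰ at P satisfies sin²(θ/2) = ⟨v, n₀⟩² / (‖v‖² · ‖n₀‖²) = (k₀ − k₁)/(k₀ − k₂) and tan²(θ/2) = (⟨v, n₀⟩² · ‖n₂‖²) / (⟨v, n₂⟩² · ‖n₀‖²) = (k₀ − k₁)/(k₁ − k₂). -/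

import Mathlib

set_option maxHeartbeats 1000000


open scoped RealInnerProductSpace

/-- The angle `θ/2` between a generator direction
`v = a_e b_e c_e · n₀ + a_{h2} b_{h2} c_{h2} · n₂` of the one-sheeted
hyperboloid through `P` and the tangent plane of the ellipsoid at `P`
satisfies `sin²(θ/2) = (k₀ − k₁)/(k₀ − k₂)` and
`tan²(θ/2) = (k₀ − k₁)/(k₁ − k₂)`. -/
theorem stmt11 (ac bc x y z k0 k1 k2 : ℝ) (hbc : 0 < bc) (hba : bc < ac)
    (hk2 : -ac ^ 2 < k2) (hk2' : k2 < -bc ^ 2) (hk1 : -bc ^ 2 < k1)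
    (hk1' : k1 < 0) (hk0 : 0 < k0)
    (h0 : x ^ 2 / (ac ^ 2 + k0) + y ^ 2 / (bc ^ 2 + k0) + z ^ 2 / k0 = 1)
    (h1 : x ^ 2 / (ac ^ 2 + k1) + y ^ 2 / (bc ^ 2 + k1) + z ^ 2 / k1 = 1)
    (h2 : x ^ 2 / (ac ^ 2 + k2) + y ^ 2 / (bc ^ 2 + k2) + z ^ 2 / k2 = 1)
    (ae be ce ah2 bh2 ch2 : ℝ)
    (hae : ae = Real.sqrt (ac ^ 2 + k0)) (hbe : be = Real.sqrt (bc ^ 2 + k0))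
    (hce : ce = Real.sqrt k0)
    (hah2 : ah2 = Real.sqrt (ac ^ 2 + k2))
    (hbh2 : bh2 = Real.sqrt (-(bc ^ 2 + k2)))
    (hch2 : ch2 = Real.sqrt (-k2))
    (n0 n2 v : EuclideanSpace ℝ (Fin 3))
    (hn0 : n0 = ![x / (ac ^ 2 + k0), y / (bc ^ 2 + k0), z / k0])
    (hn2 : n2 = ![x / (ac ^ 2 + k2), y / (bc ^ 2 + k2), z / k2])
    (hv : v = (ae * be * ce) • n0 + (ah2 * bh2 * ch2) • n2) :
    ⟪v, n0⟫ ^ 2 / (‖v‖ ^ 2 * ‖n0‖ ^ 2) = (k0 - k1) / (k0 - k2) ∧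
    ⟪v, n0⟫ ^ 2 * ‖n2‖ ^ 2 / (⟪v, n2⟫ ^ 2 * ‖n0‖ ^ 2) = (k0 - k1) / (k1 - k2) := by

  have hac : 0 < ac := hbc.trans hba
  have hBpos : (0:ℝ) < bc ^ 2 := by positivity
  have hAB : bc ^ 2 < ac ^ 2 := by
    have h := mul_self_lt_mul_self hbc.le hba
    calc bc ^ 2 = bc * bc := sq bc ▸ rfl
    _ < ac * ac := h
    _ = ac ^ 2 := (sq ac).symm
  have ha0 : (0:ℝ) < ac ^ 2 + k0 := by positivity
  have hb0 : (0:ℝ) < bc ^ 2 + k0 := by positivity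
  have ha1 : (0:ℝ) < ac ^ 2 + k1 := by linarith
  have hb1 : (0:ℝ) < bc ^ 2 + k1 := by linarith
  have ha2 : (0:ℝ) < ac ^ 2 + k2 := by linarith
  have hb2 : bc ^ 2 + k2 < 0 := by linarith
  have hc2 : k2 < 0 := by linarith
  have hc1 : k1 < 0 := hk1'
  have h01 : k1 < k0 := by linarith
  have h02 : k2 < k0 := by linarith
  have h12 : k2 < k1 := by linarith
  have hA : (ac:ℝ) ^ 2 ≠ 0 := by positivity
  have hB : (bc:ℝ) ^ 2 ≠ 0 := by positivity
  have hABn : (ac:ℝ) ^ 2 - bc ^ 2 ≠ 0 := ne_of_gt (by linarith)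
  have ha0' : (ac:ℝ) ^ 2 + k0 ≠ 0 := ne_of_gt ha0
  have hb0' : (bc:ℝ) ^ 2 + k0 ≠ 0 := ne_of_gt hb0
  have hc0' : (k0:ℝ) ≠ 0 := ne_of_gt hk0
  have ha1' : (ac:ℝ) ^ 2 + k1 ≠ 0 := ne_of_gt ha1
  have hb1' : (bc:ℝ) ^ 2 + k1 ≠ 0 := ne_of_gt hb1
  have hc1' : (k1:ℝ) ≠ 0 := ne_of_lt hc1
  have ha2' : (ac:ℝ) ^ 2 + k2 ≠ 0 := ne_of_gt ha2
  have hb2' : (bc:ℝ) ^ 2 + k2 ≠ 0 := ne_of_lt hb2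
  have hc2' : (k2:ℝ) ≠ 0 := ne_of_lt hc2
  field_simp at h0 h1 h2
  have hD : (k0 - k1) * ((k0 - k2) * (k1 - k2)) ≠ 0 := by
    have : (0:ℝ) < (k0 - k1) * ((k0 - k2) * (k1 - k2)) := by
      apply mul_pos (by linarith) (mul_pos (by linarith) (by linarith))
    exact ne_of_gt this
  have hx : x ^ 2 * (ac ^ 2 * (ac ^ 2 - bc ^ 2))
      = (ac ^ 2 + k0) * ((ac ^ 2 + k1) * (ac ^ 2 + k2)) := by
    apply mul_right_cancel₀ hD
    linear_combination ((-ac ^ 2 - k1) * (-ac ^ 2 - k2) * (k1 - k2)) * h0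
      + (-(-ac ^ 2 - k0) * (-ac ^ 2 - k2) * (k0 - k2)) * h1
      + ((-ac ^ 2 - k0) * (-ac ^ 2 - k1) * (k0 - k1)) * h2
  have hy : y ^ 2 * (bc ^ 2 * (ac ^ 2 - bc ^ 2))
      = -((bc ^ 2 + k0) * ((bc ^ 2 + k1) * (bc ^ 2 + k2))) := by
    apply mul_right_cancel₀ hD
    linear_combination (-((-bc ^ 2 - k1) * (-bc ^ 2 - k2) * (k1 - k2))) * h0
      + ((-bc ^ 2 - k0) * (-bc ^ 2 - k2) * (k0 - k2)) * h1
      + (-((-bc ^ 2 - k0) * (-bc ^ 2 - k1) * (k0 - k1))) * h2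
  have hz : z ^ 2 * (ac ^ 2 * bc ^ 2) = k0 * (k1 * k2) := by
    apply mul_right_cancel₀ hD
    linear_combination ((-k1) * (-k2) * (k1 - k2)) * h0
      + (-(-k0) * (-k2) * (k0 - k2)) * h1
      + ((-k0) * (-k1) * (k0 - k1)) * h2
  have hx2 : x ^ 2 = (ac ^ 2 + k0) * ((ac ^ 2 + k1) * (ac ^ 2 + k2)) / (ac ^ 2 * (ac ^ 2 - bc ^ 2)) := by
    rw [eq_div_iff (by positivity)]; exact hx
  have hy2 : y ^ 2 = -((bc ^ 2 + k0) * ((bc ^ 2 + k1) * (bc ^ 2 + k2))) / (bc ^ 2 * (ac ^ 2 - bc ^ 2)) := by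
    rw [eq_div_iff (by positivity)]; exact hy
  have hz2 : z ^ 2 = k0 * (k1 * k2) / (ac ^ 2 * bc ^ 2) := by
    rw [eq_div_iff (by positivity)]; exact hz
  -- coordinate expansions of inner products
  have hinner0 : ⟪n0, n0⟫ = x ^ 2 / (ac ^ 2 + k0) ^ 2 + y ^ 2 / (bc ^ 2 + k0) ^ 2 + z ^ 2 / k0 ^ 2 := by
    simp only [PiLp.inner_apply, hn0]
    simp [PiLp.inner_apply, RCLike.inner_apply, Fin.sum_univ_three]
    field_simp
  have hinner2 : ⟪n2, n2⟫ = x ^ 2 / (ac ^ 2 + k2) ^ 2 + y ^ 2 / (bc ^ 2 + k2) ^ 2 + z ^ 2 / k2 ^ 2 := by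
    simp only [PiLp.inner_apply, hn2]
    simp [PiLp.inner_apply, RCLike.inner_apply, Fin.sum_univ_three]
    field_simp
  have hinner02 : ⟪n0, n2⟫ = x ^ 2 / ((ac ^ 2 + k0) * (ac ^ 2 + k2))
      + y ^ 2 / ((bc ^ 2 + k0) * (bc ^ 2 + k2)) + z ^ 2 / (k0 * k2) := by
    simp only [PiLp.inner_apply, hn0, hn2]
    simp [PiLp.inner_apply, RCLike.inner_apply, Fin.sum_univ_three]
    field_simp
  have e00 : ⟪n0, n0⟫ = (k0 - k1) * (k0 - k2) / ((ac ^ 2 + k0) * ((bc ^ 2 + k0) * k0)) := by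
    rw [hinner0, hx2, hy2, hz2]
    field_simp
    ring
  have e22 : ⟪n2, n2⟫ = (k0 - k2) * (k1 - k2) / ((ac ^ 2 + k2) * ((bc ^ 2 + k2) * k2)) := by
    rw [hinner2, hx2, hy2, hz2]
    field_simp
    ring
  have e02 : ⟪n0, n2⟫ = 0 := by
    rw [hinner02, hx2, hy2, hz2]
    field_simp
    ring
  have e20 : ⟪n2, n0⟫ = 0 := by rw [real_inner_comm]; exact e02
  have hαe2 : (ae * be * ce) ^ 2 = (ac ^ 2 + k0) * ((bc ^ 2 + k0) * k0) := by
    rw [hae, hbe, hce, mul_pow, mul_pow, Real.sq_sqrt ha0.le, Real.sq_sqrt hb0.le,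
      Real.sq_sqrt hk0.le]
    ring
  have hαh2 : (ah2 * bh2 * ch2) ^ 2 = (ac ^ 2 + k2) * ((bc ^ 2 + k2) * k2) := by
    rw [hah2, hbh2, hch2, mul_pow, mul_pow, Real.sq_sqrt ha2.le,
      Real.sq_sqrt (by linarith : (0:ℝ) ≤ -(bc ^ 2 + k2)),
      Real.sq_sqrt (by linarith : (0:ℝ) ≤ -k2)]
    ring
  have hvn0 : ⟪v, n0⟫ = (ae * be * ce) * ⟪n0, n0⟫ := by
    rw [hv, inner_add_left, real_inner_smul_left, real_inner_smul_left, e20]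
    ring
  have hvn2 : ⟪v, n2⟫ = (ah2 * bh2 * ch2) * ⟪n2, n2⟫ := by
    rw [hv, inner_add_left, real_inner_smul_left, real_inner_smul_left, e02]
    ring
  have hvv : ⟪v, v⟫ = (ae * be * ce) ^ 2 * ⟪n0, n0⟫ + (ah2 * bh2 * ch2) ^ 2 * ⟪n2, n2⟫ := by
    rw [hv, inner_add_left, inner_add_right, inner_add_right, real_inner_smul_left,
      real_inner_smul_left, real_inner_smul_left, real_inner_smul_left,
      real_inner_smul_right, real_inner_smul_right, real_inner_smul_right,
      real_inner_smul_right, e02, e20]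
    ring
  have hnv : ‖v‖ ^ 2 = (ae * be * ce) ^ 2 * ⟪n0, n0⟫ + (ah2 * bh2 * ch2) ^ 2 * ⟪n2, n2⟫ := by
    rw [← real_inner_self_eq_norm_sq]; exact hvv
  have hnn0 : ‖n0‖ ^ 2 = ⟪n0, n0⟫ := by rw [← real_inner_self_eq_norm_sq]
  have hnn2 : ‖n2‖ ^ 2 = ⟪n2, n2⟫ := by rw [← real_inner_self_eq_norm_sq]
  have h01' : k0 - k1 ≠ 0 := by intro h; apply hD; rw [h]; ring
  have h02' : k0 - k2 ≠ 0 := sub_ne_zero.mpr (ne_of_gt h02)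
  have h12' : k1 - k2 ≠ 0 := sub_ne_zero.mpr (ne_of_gt h12)
  have E0 : (ac ^ 2 + k0) * ((bc ^ 2 + k0) * k0) * ⟪n0, n0⟫ = (k0 - k1) * (k0 - k2) := by
    rw [e00]; field_simp
  have E2 : (ac ^ 2 + k2) * ((bc ^ 2 + k2) * k2) * ⟪n2, n2⟫ = (k0 - k2) * (k1 - k2) := by
    rw [e22]; field_simp
  have F0 : ⟪v, n0⟫ ^ 2 = (k0 - k1) * (k0 - k2) * ⟪n0, n0⟫ := by
    rw [hvn0, mul_pow, hαe2]
    linear_combination ⟪n0, n0⟫ * E0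
  have F2 : ⟪v, n2⟫ ^ 2 = (k0 - k2) * (k1 - k2) * ⟪n2, n2⟫ := by
    rw [hvn2, mul_pow, hαh2]
    linear_combination ⟪n2, n2⟫ * E2
  have Fv : ‖v‖ ^ 2 = (k0 - k2) ^ 2 := by
    rw [hnv, hαe2, hαh2]
    linear_combination E0 + E2
  have hX : ⟪n0, n0⟫ ≠ 0 := by
    rw [e00]
    exact ne_of_gt (div_pos (mul_pos (by linarith) (by linarith))
      (by positivity))
  have hY : ⟪n2, n2⟫ ≠ 0 := by
    rw [e22]
    refine ne_of_gt (div_pos (mul_pos (by linarith) (by linarith)) ?_)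
    have : (0:ℝ) < (bc ^ 2 + k2) * k2 := mul_pos_of_neg_of_neg hb2 hc2
    exact mul_pos ha2 this
  constructor
  · rw [F0, Fv, hnn0]
    rw [div_eq_div_iff (mul_ne_zero (pow_ne_zero 2 h02') hX) h02']
    ring
  · rw [F0, F2, hnn0, hnn2]
    rw [div_eq_div_iff (mul_ne_zero (mul_ne_zero (mul_ne_zero h02' h12') hY) hX) h12']
    ring
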